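/- Let E > 0, β₁, β₂ > 0, and g₁, g₂ > 0. Set a = Σ_{j=1,2} g_j/(e^{β_j E} - 1) and b = Σ_{j=1,2} g_j e^{β_j E}/(e^{β_j E} - 1), and define α = b/a. Then α = 1 + (g₁ + g₂)/(g₁ρ₁ + g₂ρ₂) where ρ_j = 1/(e^{β_j E} - 1). Moreover, if β₁ > β₂ then α < e^{β₁ E}, and if β₁ = β₂ then α = e^{β₁ E}. -/

import Mathlib

/-- Properties of `α = b/a` for the two-level system: the alternative formula
`α = 1 + (g₁+g₂)/(g₁ρ₁+g₂ρ₂)`, the strict bound `α < e^{β₁E}` when `β₁ > β₂`,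
and equality `α = e^{β₁E}` when `β₁ = β₂`. -/
theorem two_level_alpha_properties (E β₁ β₂ g₁ g₂ : ℝ)
    (hE : 0 < E) (hβ₁ : 0 < β₁) (hβ₂ : 0 < β₂) (hg₁ : 0 < g₁) (hg₂ : 0 < g₂) :
    let ρ₁ : ℝ := 1 / (Real.exp (β₁ * E) - 1)
    let ρ₂ : ℝ := 1 / (Real.exp (β₂ * E) - 1)
    let a : ℝ := g₁ / (Real.exp (β₁ * E) - 1) + g₂ / (Real.exp (β₂ * E) - 1)
    let b : ℝ := g₁ * Real.exp (β₁ * E) / (Real.exp (β₁ * E) - 1) +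
      g₂ * Real.exp (β₂ * E) / (Real.exp (β₂ * E) - 1)
    let α : ℝ := b / a
    α = 1 + (g₁ + g₂) / (g₁ * ρ₁ + g₂ * ρ₂) ∧
      (β₂ < β₁ → α < Real.exp (β₁ * E)) ∧
      (β₁ = β₂ → α = Real.exp (β₁ * E)) := by
  intro ρ₁ ρ₂ a b α
  have hx : (0:ℝ) < Real.exp (β₁ * E) - 1 := by
    have : (1:ℝ) < Real.exp (β₁ * E) := by
      rw [show (1:ℝ) = Real.exp 0 by simp]
      exact Real.exp_lt_exp.mpr (by positivity)
    linarith
  have hy : (0:ℝ) < Real.exp (β₂ * E) - 1 := by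
    have : (1:ℝ) < Real.exp (β₂ * E) := by
      rw [show (1:ℝ) = Real.exp 0 by simp]
      exact Real.exp_lt_exp.mpr (by positivity)
    linarith
  have ha : 0 < a := by
    have : 0 < g₁ / (Real.exp (β₁ * E) - 1) := by positivity
    have : 0 < g₂ / (Real.exp (β₂ * E) - 1) := by positivity
    show 0 < g₁ / (Real.exp (β₁ * E) - 1) + g₂ / (Real.exp (β₂ * E) - 1)
    linarith
  have hb : b = a + (g₁ + g₂) := by
    show g₁ * Real.exp (β₁ * E) / (Real.exp (β₁ * E) - 1) +
      g₂ * Real.exp (β₂ * E) / (Real.exp (β₂ * E) - 1) =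
      g₁ / (Real.exp (β₁ * E) - 1) + g₂ / (Real.exp (β₂ * E) - 1) + (g₁ + g₂)
    have h1 := hx.ne'
    have h2 := hy.ne'
    have k1 : g₁ * Real.exp (β₁ * E) / (Real.exp (β₁ * E) - 1) =
        g₁ / (Real.exp (β₁ * E) - 1) + g₁ := by
      rw [div_add' _ _ _ h1]; congr 1; ring
    have k2 : g₂ * Real.exp (β₂ * E) / (Real.exp (β₂ * E) - 1) =
        g₂ / (Real.exp (β₂ * E) - 1) + g₂ := by
      rw [div_add' _ _ _ h2]; congr 1; ring
    rw [k1, k2]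
    ring
  have hαa : α = 1 + (g₁ + g₂) / a := by
    show b / a = 1 + (g₁ + g₂) / a
    rw [hb]
    field_simp
  have haρ : a = g₁ * ρ₁ + g₂ * ρ₂ := by
    show g₁ / (Real.exp (β₁ * E) - 1) + g₂ / (Real.exp (β₂ * E) - 1) =
      g₁ * (1 / (Real.exp (β₁ * E) - 1)) + g₂ * (1 / (Real.exp (β₂ * E) - 1))
    ring
  refine ⟨by rw [hαa, haρ], ?_, ?_⟩
  · intro hlt
    have hxy : Real.exp (β₂ * E) - 1 < Real.exp (β₁ * E) - 1 := by
      have : Real.exp (β₂ * E) < Real.exp (β₁ * E) :=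
        Real.exp_lt_exp.mpr (by nlinarith)
      linarith
    rw [hαa]
    have key : (g₁ + g₂) / a < Real.exp (β₁ * E) - 1 := by
      rw [div_lt_iff₀ ha]
      show g₁ + g₂ < (Real.exp (β₁ * E) - 1) *
        (g₁ / (Real.exp (β₁ * E) - 1) + g₂ / (Real.exp (β₂ * E) - 1))
      rw [mul_add, mul_div_cancel₀ _ (ne_of_gt hx)]
      have : g₂ < (Real.exp (β₁ * E) - 1) * (g₂ / (Real.exp (β₂ * E) - 1)) := by
        rw [mul_div_assoc', lt_div_iff₀ hy]
        nlinarith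
      linarith
    linarith
  · intro heq
    subst heq
    rw [hαa]
    have : (g₁ + g₂) / a = Real.exp (β₁ * E) - 1 := by
      rw [div_eq_iff (ne_of_gt ha)]
      show g₁ + g₂ = (Real.exp (β₁ * E) - 1) *
        (g₁ / (Real.exp (β₁ * E) - 1) + g₂ / (Real.exp (β₁ * E) - 1))
      field_simp
    linarith
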